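/- Let t be an element of a field F and let A be an associative unital F-algebra containing elements e₁, e₂, f₁, f₂ satisfying: e_i² = (1+t)e_i, f_i² = −f_i, f_ie_i = e_if_i = −e_i, e₁e₂e₁ = e₁, e₂e₁e₂ = e₂, f₁f₂f₁ = f₂f₁f₂, f₁e₂e₁ = f₂e₁, f₂e₁e₂ = f₁e₂, e₁e₂f₁ = e₁f₂, e₂e₁f₂ = e₂f₁. For nonzero z, w define Ř_i(z,w) = 1 + ((1−z/w)/(1−t·w/z))e_i + (1−z/w)f_i. Then the Yang–Baxter equation Ř₁(z₂,z₃)Ř₂(z₁,z₃)Ř₁(z₁,z₂) = Ř₂(z₁,z₂)Ř₁(z₁,z₃)Ř₂(z₂,z₃) holds for generic z₁, z₂, z₃. -/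

import Mathlib

set_option maxHeartbeats 2000000 in
/-- Yang–Baxter equation for the crossing Temperley–Lieb R-matrix
`Ř_i(z,w) = 1 + ((1−z/w)/(1−t·w/z)) e_i + (1−z/w) f_i`, loop weight `β = 1 + t`. -/
theorem stmt3 (F : Type*) [Field F] (A : Type*) [Ring A] [Algebra F A]
    (t : F) (e1 e2 f1 f2 : A)
    (he1 : e1 * e1 = (1 + t) • e1) (he2 : e2 * e2 = (1 + t) • e2)
    (hf1 : f1 * f1 = -f1) (hf2 : f2 * f2 = -f2)
    (hfe1 : f1 * e1 = -e1) (hef1 : e1 * f1 = -e1)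
    (hfe2 : f2 * e2 = -e2) (hef2 : e2 * f2 = -e2)
    (h121 : e1 * e2 * e1 = e1) (h212 : e2 * e1 * e2 = e2)
    (hbraid : f1 * f2 * f1 = f2 * f1 * f2)
    (hm1 : f1 * e2 * e1 = f2 * e1) (hm2 : f2 * e1 * e2 = f1 * e2)
    (hm3 : e1 * e2 * f1 = e1 * f2) (hm4 : e2 * e1 * f2 = e2 * f1)
    (R : A → A → F → F → A)
    (hR : ∀ (e f : A) (z w : F),
      R e f z w = 1 + ((1 - z / w) / (1 - t * w / z)) • e + (1 - z / w) • f)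
    (z1 z2 z3 : F) (hz1 : z1 ≠ 0) (hz2 : z2 ≠ 0) (hz3 : z3 ≠ 0)
    (hd23 : 1 - t * z3 / z2 ≠ 0) (hd13 : 1 - t * z3 / z1 ≠ 0)
    (hd12 : 1 - t * z2 / z1 ≠ 0) :
    R e1 f1 z2 z3 * R e2 f2 z1 z3 * R e1 f1 z1 z2 =
      R e2 f2 z1 z2 * R e1 f1 z1 z3 * R e2 f2 z2 z3 := by
  have hA1 : e1 * f2 * e1 = -e1 := by
    calc e1 * f2 * e1 = e1 * (f2 * e1) := by rw [mul_assoc]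
    _ = e1 * (f1 * e2 * e1) := by rw [hm1]
    _ = (e1 * f1) * (e2 * e1) := by noncomm_ring
    _ = -e1 := by rw [hef1, neg_mul, ← mul_assoc, h121]
  have hA2 : e1 * f2 * f1 = -(e1 * f2) := by
    calc e1 * f2 * f1 = e1 * e2 * f1 * f1 := by rw [hm3]
    _ = (e1 * e2) * (f1 * f1) := by noncomm_ring
    _ = -(e1 * f2) := by rw [hf1, mul_neg, hm3]
  have hA3 : f1 * f2 * e1 = -(f2 * e1) := by
    calc f1 * f2 * e1 = f1 * (f2 * e1) := by rw [mul_assoc]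
    _ = f1 * (f1 * e2 * e1) := by rw [hm1]
    _ = (f1 * f1) * (e2 * e1) := by noncomm_ring
    _ = -(f2 * e1) := by rw [hf1, neg_mul, ← mul_assoc, hm1]
  have hA4 : f1 * e2 * f1 = f2 * e1 * f2 := by
    have h : e2 * f1 = e2 * e1 * f2 := hm4.symm
    calc f1 * e2 * f1 = f1 * (e2 * f1) := by rw [mul_assoc]
    _ = (f1 * e2 * e1) * f2 := by rw [h]; noncomm_ring
    _ = f2 * e1 * f2 := by rw [hm1]
  have hB1 : e2 * f1 * e2 = -e2 := by
    calc e2 * f1 * e2 = e2 * (f1 * e2) := by rw [mul_assoc]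
    _ = e2 * (f2 * e1 * e2) := by rw [hm2]
    _ = (e2 * f2) * (e1 * e2) := by noncomm_ring
    _ = -e2 := by rw [hef2, neg_mul, ← mul_assoc, h212]
  have hB2 : e2 * f1 * f2 = -(e2 * f1) := by
    calc e2 * f1 * f2 = e2 * e1 * f2 * f2 := by rw [hm4]
    _ = (e2 * e1) * (f2 * f2) := by noncomm_ring
    _ = -(e2 * f1) := by rw [hf2, mul_neg, hm4]
  have hB3 : f2 * f1 * e2 = -(f1 * e2) := by
    calc f2 * f1 * e2 = f2 * (f1 * e2) := by rw [mul_assoc]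
    _ = f2 * (f2 * e1 * e2) := by rw [hm2]
    _ = (f2 * f2) * (e1 * e2) := by noncomm_ring
    _ = -(f1 * e2) := by rw [hf2, neg_mul, ← mul_assoc, hm2]
  have h23 : z2 - t * z3 ≠ 0 := by
    intro h; apply hd23
    have : t * z3 = z2 := by linear_combination -h
    rw [this, div_self hz2]; ring
  have h13 : z1 - t * z3 ≠ 0 := by
    intro h; apply hd13
    have : t * z3 = z1 := by linear_combination -h
    rw [this, div_self hz1]; ring
  have h12 : z1 - t * z2 ≠ 0 := by
    intro h; apply hd12
    have : t * z2 = z1 := by linear_combination -h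
    rw [this, div_self hz1]; ring
  have hN : ∀ (e f : A) (z w : F), z ≠ 0 → w ≠ 0 → (1 - t * w / z ≠ 0) → (z - t * w ≠ 0) →
      (w * (z - t * w)) • R e f z w
        = (w * (z - t * w)) • (1 : A) + (z * (w - z)) • e + ((z - t * w) * (w - z)) • f := by
    intro e f z w hz hw hd hp
    rw [hR]
    match_scalars <;> field_simp [show z - w * t ≠ 0 by rwa [mul_comm w t]] <;> ring
  have hN23e := hN e1 f1 z2 z3 hz2 hz3 hd23 h23
  have hN23f := hN e2 f2 z2 z3 hz2 hz3 hd23 h23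
  have hN13e := hN e2 f2 z1 z3 hz1 hz3 hd13 h13
  have hN13f := hN e1 f1 z1 z3 hz1 hz3 hd13 h13
  have hN12e := hN e1 f1 z1 z2 hz1 hz2 hd12 h12
  have hN12f := hN e2 f2 z1 z2 hz1 hz2 hd12 h12
  set N23 : F := z3 * (z2 - t * z3) with hN23def
  set N13 : F := z3 * (z1 - t * z3) with hN13def
  set N12 : F := z2 * (z1 - t * z2) with hN12def
  have hn23 : N23 ≠ 0 := mul_ne_zero hz3 h23
  have hn13 : N13 ≠ 0 := mul_ne_zero hz3 h13
  have hn12 : N12 ≠ 0 := mul_ne_zero hz2 h12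
  have key : (N23 • R e1 f1 z2 z3) * (N13 • R e2 f2 z1 z3) * (N12 • R e1 f1 z1 z2)
      = (N12 • R e2 f2 z1 z2) * (N13 • R e1 f1 z1 z3) * (N23 • R e2 f2 z2 z3) := by
    rw [hN23e, hN23f, hN13e, hN13f, hN12e, hN12f]
    simp only [mul_add, add_mul, one_mul, mul_one, smul_mul_assoc, mul_smul_comm, smul_smul]
    simp only [h121, h212, hbraid, hm1, hm2, hm3, hm4, hA1, hA2, hA3, hA4, hB1, hB2, hB3,
      hef1, hfe1, hef2, hfe2, he1, he2, hf1, hf2, mul_neg, neg_mul, smul_neg, smul_smul]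
    match_scalars <;> ring
  have key2 : (N23 * N13 * N12) • (R e1 f1 z2 z3 * R e2 f2 z1 z3 * R e1 f1 z1 z2)
      = (N23 * N13 * N12) • (R e2 f2 z1 z2 * R e1 f1 z1 z3 * R e2 f2 z2 z3) := by
    calc (N23 * N13 * N12) • (R e1 f1 z2 z3 * R e2 f2 z1 z3 * R e1 f1 z1 z2)
        = (N23 • R e1 f1 z2 z3) * (N13 • R e2 f2 z1 z3) * (N12 • R e1 f1 z1 z2) := by
          simp only [smul_mul_assoc, mul_smul_comm, smul_smul]
          match_scalars
          ring
    _ = (N12 • R e2 f2 z1 z2) * (N13 • R e1 f1 z1 z3) * (N23 • R e2 f2 z2 z3) := key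
    _ = (N23 * N13 * N12) • (R e2 f2 z1 z2 * R e1 f1 z1 z3 * R e2 f2 z2 z3) := by
          simp only [smul_mul_assoc, mul_smul_comm, smul_smul]
          match_scalars
          ring
  have hN0 : N23 * N13 * N12 ≠ 0 := mul_ne_zero (mul_ne_zero hn23 hn13) hn12
  calc R e1 f1 z2 z3 * R e2 f2 z1 z3 * R e1 f1 z1 z2
      = (N23 * N13 * N12)⁻¹ • ((N23 * N13 * N12) • (R e1 f1 z2 z3 * R e2 f2 z1 z3 * R e1 f1 z1 z2)) :=
        (inv_smul_smul₀ hN0 _).symm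
  _ = (N23 * N13 * N12)⁻¹ • ((N23 * N13 * N12) • (R e2 f2 z1 z2 * R e1 f1 z1 z3 * R e2 f2 z2 z3)) := by
        rw [key2]
  _ = R e2 f2 z1 z2 * R e1 f1 z1 z3 * R e2 f2 z2 z3 := inv_smul_smul₀ hN0 _
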